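/- Let μ_train be the uniform distribution on a finite set 𝒳 = {x₁,…,x_N} ⊂ ℝ^d, let α > −d, 0 < σ_T < ∞, and fix 0 < k < √(2(d+α+2)/(3(d+α))). Then for each i there exists δ > 0 (depending on d, α, σ_T, k, 𝒳) such that whenever 0 < σ_ε < δ, the function L(x) := (1/N) Σ_j Φ_{σ_ε}^{σ_T}((d+α)/2 − 1, |x−x_j|²/2) is strictly concave on the open ball { x : |x − x_i| < k σ_ε }. -/

import Mathlib

open MeasureTheory Real Filter intervalIntegral
open scoped RealInnerProductSpace


lemma myexp1 (t : ℝ) (ht : 0 ≤ t) : 1 - 3*t ≤ Real.exp (-t) * (1 - 2*t) := by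
  have h1 := Real.add_one_le_exp t
  have h2 := Real.add_one_le_exp (-t)
  have h3 := Real.exp_pos t
  have h4 := Real.exp_pos (-t)
  have h5 : Real.exp (-t) * Real.exp t = 1 := by rw [← Real.exp_add]; simp
  have hE2 : Real.exp (-t) * (1 + t) ≤ 1 := by nlinarith
  nlinarith [sq_nonneg t, mul_nonneg h4.le ht]

lemma myrpow_exp_bound {m e u : ℝ} (hm : 0 < m) (he : 0 < e) (hu : 0 ≤ u) :
    u ^ m * Real.exp (-(e * u)) ≤ (m / e) ^ m * Real.exp (-m) := by
  set t : ℝ := e * u / m with htdef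
  have ht : 0 ≤ t := by positivity
  have hu' : u = (m / e) * t := by field_simp [htdef]; rw [htdef]; field_simp
  have h1 : u ^ m = (m / e) ^ m * t ^ m := by
    rw [hu', Real.mul_rpow (by positivity) ht]
  have h2 : Real.exp (-(e * u)) = Real.exp (-t) ^ m := by
    rw [← Real.exp_mul]
    congr 1
    field_simp [htdef]
    rw [htdef]; field_simp
  have h3 : t * Real.exp (-t) ≤ Real.exp (-1) := by
    have := Real.add_one_le_exp (t - 1)
    have h6 : Real.exp (t - 1) * Real.exp (-t) = Real.exp (-1) := by
      rw [← Real.exp_add]; ring_nf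
    nlinarith [Real.exp_pos (-t), Real.exp_pos (t-1)]
  have h4 : t ^ m * Real.exp (-t) ^ m ≤ Real.exp (-m) := by
    rw [← Real.mul_rpow ht (Real.exp_pos _).le]
    calc (t * Real.exp (-t)) ^ m ≤ Real.exp (-1) ^ m :=
          Real.rpow_le_rpow (by positivity) h3 hm.le
      _ = Real.exp (-m) := by rw [← Real.exp_mul]; ring_nf
  calc u ^ m * Real.exp (-(e*u)) = (m/e) ^ m * (t ^ m * Real.exp (-t) ^ m) := by
        rw [h1, h2]; ring
    _ ≤ (m/e) ^ m * Real.exp (-m) := by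
        have : (0:ℝ) ≤ (m/e) ^ m := Real.rpow_nonneg (by positivity) m
        nlinarith


lemma myContOn {c A : ℝ} (hc : 0 < c) (hA : 0 < A) (s z : ℝ) {S : Set ℝ}
    (hS : S ⊆ Set.uIcc c A) :
    ContinuousOn (fun u : ℝ => u ^ (s - 1) * Real.exp (-z * u)) S := by
  intro u hu
  have hu0 : 0 < u := lt_of_lt_of_le (lt_min hc hA) (hS hu).1
  exact (((Real.continuousAt_rpow_const u (s-1) (Or.inl hu0.ne')).mul
    ((Real.continuous_exp.comp (continuous_const.mul continuous_id)).continuousAt))).continuousWithinAt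

lemma myIntegrable {c A : ℝ} (hc : 0 < c) (hA : 0 < A) (s z : ℝ) :
    IntervalIntegrable (fun u : ℝ => u ^ (s - 1) * Real.exp (-z * u)) volume c A :=
  (myContOn hc hA s z (le_refl _)).intervalIntegrable

lemma myHasDerivAt_J {c A : ℝ} (hc : 0 < c) (hA : 0 < A) (s z : ℝ) :
    HasDerivAt (fun z : ℝ => ∫ u in c..A, u ^ (s - 1) * Real.exp (-z * u))
      (-∫ u in c..A, u ^ ((s + 1) - 1) * Real.exp (-z * u)) z := by
  have hsub : Set.uIoc c A ⊆ Set.uIcc c A := Set.Ioc_subset_Icc_self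
  have key := intervalIntegral.hasDerivAt_integral_of_dominated_loc_of_deriv_le
    (F := fun (x : ℝ) (u : ℝ) => u ^ (s - 1) * Real.exp (-x * u))
    (F' := fun (x : ℝ) (u : ℝ) => u ^ (s - 1) * (-u * Real.exp (-x * u)))
    (x₀ := z) (a := c) (b := A) (μ := volume)
    (bound := fun _ => ((c ⊓ A) ^ s + (c ⊔ A) ^ s) * Real.exp ((|z| + 1) * (c + A)))
    (s := Metric.ball z 1) (Metric.ball_mem_nhds z one_pos)
    ?meas ?int ?meas' ?bound ?bint ?diff
  · -- convert the derivative value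
    have h2 : (∫ u in c..A, u ^ (s-1) * (-u * Real.exp (-z * u)))
        = -∫ u in c..A, u ^ ((s+1)-1) * Real.exp (-z * u) := by
      rw [← intervalIntegral.integral_neg]
      apply intervalIntegral.integral_congr
      intro u hu
      have hu0 : 0 < u := lt_of_lt_of_le (lt_min hc hA) hu.1
      have : u ^ ((s+1)-1) = u ^ (s-1) * u := by
        rw [show (s+1)-1 = (s-1)+1 by ring, Real.rpow_add_one hu0.ne']
      simp only [this]
      ring
    rw [h2] at key
    exact key.2
  case meas =>
    filter_upwards with x
    exact ((myContOn hc hA s x hsub).mono (le_refl _)).aestronglyMeasurable measurableSet_uIoc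
  case int => exact myIntegrable hc hA s z
  case meas' =>
    apply ContinuousOn.aestronglyMeasurable _ measurableSet_uIoc
    intro u hu
    have hu0 : 0 < u := lt_of_lt_of_le (lt_min hc hA) (hsub hu).1
    exact ((Real.continuousAt_rpow_const u (s-1) (Or.inl hu0.ne')).mul
      ((continuous_id.neg.mul (Real.continuous_exp.comp
        (continuous_const.mul continuous_id))).continuousAt)).continuousWithinAt
  case bound =>
    filter_upwards with u hu x hx
    have hu0 : 0 < u := (lt_min hc hA).trans hu.1
    have huA : u ≤ c + A := le_trans hu.2 (by rcases le_total c A with h | h <;> simp [h] <;> linarith)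
    have hx1 : |x| ≤ |z| + 1 := by
      have := mem_ball_iff_norm.mp hx
      have := abs_sub_abs_le_abs_sub x z
      simp only [Real.norm_eq_abs] at *
      linarith
    have hb1 : u ^ (s-1) * u = u ^ s := by
      rw [← Real.rpow_add_one hu0.ne']; ring_nf
    have hb2 : u ^ s ≤ (c ⊓ A) ^ s + (c ⊔ A) ^ s := by
      rcases le_total 0 s with hs | hs
      · have : u ^ s ≤ (c ⊔ A) ^ s := Real.rpow_le_rpow hu0.le (le_trans hu.2 (le_refl _)) hs
        have h0 : (0:ℝ) ≤ (c ⊓ A) ^ s := Real.rpow_nonneg (le_of_lt (lt_min hc hA)) s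
        linarith
      · have h1 : u ^ s ≤ (c ⊓ A) ^ s :=
          Real.rpow_le_rpow_of_nonpos (lt_min hc hA) hu.1.le hs
        have h0 : (0:ℝ) ≤ (c ⊔ A) ^ s := Real.rpow_nonneg (le_of_lt (lt_of_lt_of_le hc le_sup_left)) s
        linarith
    have hb3 : Real.exp (-x * u) ≤ Real.exp ((|z| + 1) * (c + A)) := by
      apply Real.exp_le_exp.mpr
      have : -x * u ≤ |x| * u := by
        have : -x ≤ |x| := neg_le_abs x
        nlinarith
      calc -x * u ≤ |x| * u := this
        _ ≤ (|z| + 1) * (c + A) := by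
            apply mul_le_mul hx1 huA hu0.le (by positivity)
    have hnn : (0:ℝ) ≤ u ^ s := Real.rpow_nonneg hu0.le s
    calc ‖u ^ (s-1) * (-u * Real.exp (-x * u))‖
        = u ^ s * Real.exp (-x * u) := by
          rw [Real.norm_eq_abs, abs_mul, abs_mul, abs_neg,
            abs_of_nonneg (Real.rpow_nonneg hu0.le _), abs_of_nonneg hu0.le,
            abs_of_nonneg (Real.exp_pos _).le, ← mul_assoc, hb1]
      _ ≤ ((c ⊓ A) ^ s + (c ⊔ A) ^ s) * Real.exp ((|z| + 1) * (c + A)) := by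
          apply mul_le_mul hb2 hb3 (Real.exp_pos _).le
          positivity
  case bint => exact intervalIntegrable_const
  case diff =>
    filter_upwards with u hu x hx
    have hu0 : 0 < u := (lt_min hc hA).trans hu.1
    have h1 : HasDerivAt (fun x : ℝ => -x * u) (-u) x := by
      simpa using ((hasDerivAt_id x).neg.mul_const u)
    have h2 : HasDerivAt (fun x : ℝ => Real.exp (-x * u)) (-u * Real.exp (-x*u)) x := by
      simpa [mul_comm] using h1.exp
    exact h2.const_mul _

lemma myJ_nonneg {c A : ℝ} (hc : 0 < c) (hcA : c ≤ A) (s z : ℝ) :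
    0 ≤ ∫ u in c..A, u ^ (s - 1) * Real.exp (-z * u) := by
  apply intervalIntegral.integral_nonneg hcA
  intro u hu
  have hu0 : 0 < u := lt_of_lt_of_le hc hu.1
  positivity

lemma key_near {c A m k z : ℝ} (hc : 0 < c) (hcA : c ≤ A) (hm : 0 < m)
    (hz : 0 ≤ z) (hzA : z * A ≤ k ^ 2 / 2) :
    2 * z * (∫ u in c..A, u ^ ((m+1) - 1) * Real.exp (-z * u))
      - (∫ u in c..A, u ^ (m - 1) * Real.exp (-z * u))
    ≤ c ^ m / m - (1/m - 3*k^2/(2*(m+1))) * A ^ m := by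
  have hA : 0 < A := lt_of_lt_of_le hc hcA
  have hint1 := myIntegrable hc hA m z
  have hint2 := myIntegrable hc hA (m+1) z
  -- rewrite LHS as a single integral
  have hstep : 2 * z * (∫ u in c..A, u ^ ((m+1) - 1) * Real.exp (-z * u))
      - (∫ u in c..A, u ^ (m - 1) * Real.exp (-z * u))
      = ∫ u in c..A, (2*z*(u ^ ((m+1)-1) * Real.exp (-z*u)) - u ^ (m-1) * Real.exp (-z*u)) := by
    rw [intervalIntegral.integral_sub (hint2.const_mul _) hint1,
      intervalIntegral.integral_const_mul]
  rw [hstep]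
  -- compare with elementary integrand
  have hmono : (∫ u in c..A, (2*z*(u ^ ((m+1)-1) * Real.exp (-z*u)) - u ^ (m-1) * Real.exp (-z*u)))
      ≤ ∫ u in c..A, (3*z*u^((m+1)-1) - u^(m-1)) := by
    apply intervalIntegral.integral_mono_on hcA ((hint2.const_mul _).sub hint1)
    · apply IntervalIntegrable.sub
      · apply IntervalIntegrable.const_mul
        apply ContinuousOn.intervalIntegrable
        intro u hu
        have hu0 : 0 < u := lt_of_lt_of_le (lt_min hc hA) hu.1
        exact (Real.continuousAt_rpow_const u _ (Or.inl hu0.ne')).continuousWithinAt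
      · apply ContinuousOn.intervalIntegrable
        intro u hu
        have hu0 : 0 < u := lt_of_lt_of_le (lt_min hc hA) hu.1
        exact (Real.continuousAt_rpow_const u _ (Or.inl hu0.ne')).continuousWithinAt
    · intro u hu
      have hu0 : 0 < u := lt_of_lt_of_le hc hu.1
      have hkey := myexp1 (z*u) (by positivity)
      have hpow : u ^ ((m+1)-1) = u ^ (m-1) * u := by
        rw [show (m+1)-1 = (m-1)+1 by ring, Real.rpow_add_one hu0.ne']
      have hexp : Real.exp (-z*u) = Real.exp (-(z*u)) := by ring_nf
      have hnn : (0:ℝ) ≤ u ^ (m-1) := Real.rpow_nonneg hu0.le _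
      rw [hpow, hexp]
      nlinarith [mul_le_mul_of_nonneg_left hkey hnn]
  refine hmono.trans ?_
  -- evaluate the elementary integral
  have he1 : (∫ u in c..A, u ^ (m-1)) = (A ^ m - c ^ m)/m := by
    rw [integral_rpow (Or.inl (by linarith))]
    rw [show m - 1 + 1 = m by ring]
  have he2 : (∫ u in c..A, u ^ ((m+1)-1)) = (A ^ (m+1) - c ^ (m+1))/(m+1) := by
    rw [integral_rpow (Or.inl (by linarith))]
    rw [show m + 1 - 1 + 1 = m + 1 by ring]
  have hev : (∫ u in c..A, (3*z*u^((m+1)-1) - u^(m-1)))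
      = 3*z*((A ^ (m+1) - c ^ (m+1))/(m+1)) - (A ^ m - c ^ m)/m := by
    rw [intervalIntegral.integral_sub, intervalIntegral.integral_const_mul, he1, he2]
    · apply IntervalIntegrable.const_mul
      apply ContinuousOn.intervalIntegrable
      intro u hu
      have hu0 : 0 < u := lt_of_lt_of_le (lt_min hc hA) hu.1
      exact (Real.continuousAt_rpow_const u _ (Or.inl hu0.ne')).continuousWithinAt
    · apply ContinuousOn.intervalIntegrable
      intro u hu
      have hu0 : 0 < u := lt_of_lt_of_le (lt_min hc hA) hu.1
      exact (Real.continuousAt_rpow_const u _ (Or.inl hu0.ne')).continuousWithinAt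
  rw [hev]
  -- final algebra
  have hApow : A ^ (m+1) = A ^ m * A := Real.rpow_add_one (ne_of_gt hA) m
  have hcpow : (0:ℝ) ≤ c ^ (m+1) := Real.rpow_nonneg hc.le _
  have hAm : (0:ℝ) ≤ A ^ m := Real.rpow_nonneg hA.le _
  have hzA' : z * (A ^ m * A) ≤ (k^2/2) * A ^ m := by
    calc z * (A ^ m * A) = (z * A) * A ^ m := by ring
      _ ≤ (k^2/2) * A ^ m := mul_le_mul_of_nonneg_right hzA hAm
  have hm1 : (0:ℝ) < m + 1 := by linarith
  have hzT : (0:ℝ) ≤ z * c ^ (m+1) := mul_nonneg hz hcpow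
  have e1 : 3*z*((A ^ (m+1) - c ^ (m+1))/(m+1))
      = (3*(z*(A ^ m * A)) - 3*(z*c ^ (m+1)))/(m+1) := by rw [hApow]; ring
  have e2 : c ^ m / m - (1/m - 3*k^2/(2*(m+1))) * A ^ m
      = (c ^ m/m - A ^ m/m) + (3*((k^2/2) * A ^ m))/(m+1) := by
    field_simp
    ring
  have e3 : (A ^ m - c ^ m)/m = A ^ m/m - c ^ m/m := by ring
  rw [e1, e2, e3]
  have h6 : (3*(z*(A ^ m * A)) - 3*(z*c ^ (m+1)))/(m+1) ≤ (3*((k^2/2) * A ^ m))/(m+1) := by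
    apply div_le_div_of_nonneg_right ?_ hm1.le
    nlinarith
  linarith

lemma key_far {c A m z z0 : ℝ} (hc : 0 < c) (hcA : c ≤ A) (hm : 0 < m)
    (hz0 : 0 < z0) (hz : z0 ≤ z) :
    (∫ u in c..A, u ^ ((m+1) - 1) * Real.exp (-z * u))
      ≤ (2*m/z0) ^ m * Real.exp (-m) * (2/z0) := by
  have hA : 0 < A := lt_of_lt_of_le hc hcA
  set C1 : ℝ := (2*m/z0) ^ m * Real.exp (-m) with hC1
  have hC1nn : 0 ≤ C1 := by positivity
  have hint2 := myIntegrable hc hA (m+1) z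
  -- pointwise bound
  have hmono : (∫ u in c..A, u ^ ((m+1)-1) * Real.exp (-z*u))
      ≤ ∫ u in c..A, C1 * Real.exp (-(z0/2) * u) := by
    apply intervalIntegral.integral_mono_on hcA hint2
    · apply ContinuousOn.intervalIntegrable
      exact (continuous_const.mul (Real.continuous_exp.comp
        (continuous_const.mul continuous_id))).continuousOn
    · intro u hu
      have hu0 : 0 < u := lt_of_lt_of_le hc hu.1
      have hpow : u ^ ((m+1)-1) = u ^ m := by norm_num
      have h1 : u ^ m * Real.exp (-z*u) ≤ u ^ m * Real.exp (-z0*u) := by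
        apply mul_le_mul_of_nonneg_left _ (Real.rpow_nonneg hu0.le m)
        apply Real.exp_le_exp.mpr
        nlinarith
      have h2 : u ^ m * Real.exp (-z0*u)
          = (u ^ m * Real.exp (-((z0/2) * u))) * Real.exp (-(z0/2)*u) := by
        rw [mul_assoc, ← Real.exp_add]
        ring_nf
      have h3 : u ^ m * Real.exp (-((z0/2) * u)) ≤ (m/(z0/2)) ^ m * Real.exp (-m) :=
        myrpow_exp_bound hm (by positivity) hu0.le
      have h4 : (m/(z0/2)) ^ m = (2*m/z0) ^ m := by
        congr 1
        field_simp
      rw [hpow]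
      calc u ^ m * Real.exp (-z*u) ≤ u ^ m * Real.exp (-z0*u) := h1
        _ = (u ^ m * Real.exp (-((z0/2) * u))) * Real.exp (-(z0/2)*u) := h2
        _ ≤ C1 * Real.exp (-(z0/2) * u) := by
            apply mul_le_mul_of_nonneg_right _ (Real.exp_pos _).le
            rw [hC1, ← h4]
            exact h3
  refine hmono.trans ?_
  -- evaluate exp integral
  have hFTC : (∫ u in c..A, Real.exp (-(z0/2) * u))
      = (-Real.exp (-(z0/2)*A)/(z0/2)) - (-Real.exp (-(z0/2)*c)/(z0/2)) := by
    apply intervalIntegral.integral_eq_sub_of_hasDerivAt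
    · intro u hu
      have h1 : HasDerivAt (fun u : ℝ => -(z0/2) * u) (-(z0/2)) u := by
        simpa using (hasDerivAt_id u).const_mul (-(z0/2))
      have h2 := h1.exp
      have h3 := h2.div_const (-(z0/2))
      have h4 : Real.exp (-(z0/2)*u) * -(z0/2) / -(z0/2) = Real.exp (-(z0/2)*u) := by
        field_simp
      rw [h4] at h3
      have e : (fun x => Real.exp (-(z0/2)*x) / -(z0/2)) = (fun u => -Real.exp (-(z0/2)*u)/(z0/2)) := by
        funext v; rw [div_neg, neg_div]
      rw [e] at h3
      exact h3
    · apply ContinuousOn.intervalIntegrable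
      exact (Real.continuous_exp.comp (continuous_const.mul continuous_id)).continuousOn
  rw [intervalIntegral.integral_const_mul, hFTC]
  have hle : (-Real.exp (-(z0/2)*A)/(z0/2)) - (-Real.exp (-(z0/2)*c)/(z0/2)) ≤ 2/z0 := by
    have h5 : Real.exp (-(z0/2)*c) ≤ 1 := by
      apply Real.exp_le_one_iff.mpr
      nlinarith
    have h6 : (0:ℝ) < Real.exp (-(z0/2)*A) := Real.exp_pos _
    rw [div_sub_div_same, div_le_iff₀ (by positivity : (0:ℝ) < z0/2)]
    have h7 : 2/z0 * (z0/2) = 1 := by field_simp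
    rw [h7]
    linarith
  calc C1 * ((-Real.exp (-(z0/2)*A)/(z0/2)) - (-Real.exp (-(z0/2)*c)/(z0/2)))
      ≤ C1 * (2/z0) := by apply mul_le_mul_of_nonneg_left hle hC1nn
    _ = (2*m/z0) ^ m * Real.exp (-m) * (2/z0) := by rw [hC1]


/-- `Φ a b s z = ∫_{1/b²}^{1/a²} u^(s-1) e^{-z u} du`. -/
noncomputable def Phi (a b s z : ℝ) : ℝ :=
  ∫ u in (1 / b ^ 2)..(1 / a ^ 2), u ^ (s - 1) * Real.exp (-z * u)

lemma Phi_hasDerivAt {a b : ℝ} (ha : 0 < a) (hb : 0 < b) (s z : ℝ) :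
    HasDerivAt (fun z => Phi a b s z) (-(Phi a b (s+1) z)) z :=
  myHasDerivAt_J (by positivity) (by positivity) s z

lemma Phi_nonneg {a b : ℝ} (ha : 0 < a) (hab : a ≤ b) (s z : ℝ) : 0 ≤ Phi a b s z := by
  have hb : 0 < b := lt_of_lt_of_le ha hab
  apply myJ_nonneg (by positivity)
  apply one_div_le_one_div_of_le (by positivity)
  nlinarith

set_option maxHeartbeats 1000000 in
/-- Strict concavity near training points: for the empirical objective
`L(x) = (1/N) Σ_j Φ_{σε}^{σT}((d+α)/2-1, |x-x_j|²/2)`, for each `i` there is `δ > 0` such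
that for `0 < σε < δ`, `L` is strictly concave on the ball `{|x - x_i| < k σε}`. -/
theorem strict_concavity_near_data (d N : ℕ) (hN : 0 < N) (α σT k : ℝ)
    (hα : -((d : ℝ)) < α) (hσT : 0 < σT)
    (hk0 : 0 < k) (hk : k < Real.sqrt (2 * ((d : ℝ) + α + 2) / (3 * ((d : ℝ) + α))))
    (X : Fin N → EuclideanSpace ℝ (Fin d)) :
    ∀ i : Fin N, ∃ δ > 0, ∀ σε : ℝ, 0 < σε → σε < δ → σε < σT →
      StrictConcaveOn ℝ (Metric.ball (X i) (k * σε))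
        (fun x : EuclideanSpace ℝ (Fin d) =>
          (1 / (N : ℝ)) * ∑ j : Fin N,
            Phi σε σT (((d : ℝ) + α) / 2 - 1) (‖x - X j‖ ^ 2 / 2)) := by
  intro i
  classical
  have hdα : (0:ℝ) < (d:ℝ) + α := by linarith
  set m : ℝ := ((d:ℝ) + α)/2 with hmdef
  have hm : 0 < m := by rw [hmdef]; linarith
  have hk2 : k ^ 2 < 2*(m+1)/(3*m) := by
    have h1 := (Real.lt_sqrt hk0.le).mp hk
    calc k ^ 2 < 2 * ((d:ℝ) + α + 2) / (3 * ((d:ℝ) + α)) := h1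
      _ = 2*(m+1)/(3*m) := by rw [hmdef]; rw [div_eq_div_iff (by linarith) (by nlinarith)]; ring
  have hη : 0 < 1/m - 3*k^2/(2*(m+1)) := by
    have h1 : k ^ 2 * (3*m) < 2*(m+1) := (lt_div_iff₀ (by positivity)).mp hk2
    rw [sub_pos, div_lt_div_iff₀ (by positivity) (by positivity)]
    nlinarith
  set η : ℝ := 1/m - 3*k^2/(2*(m+1)) with hηdef
  set cT : ℝ := 1/σT^2 with hcTdef
  have hcT : 0 < cT := by positivity
  have hne : (Finset.univ : Finset (Fin N)).Nonempty := ⟨i, Finset.mem_univ i⟩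
  set r0 : ℝ := Finset.univ.inf' hne (fun j => if X j = X i then 1 else ‖X j - X i‖) with hr0def
  have hr0pos : 0 < r0 := by
    rw [hr0def, Finset.lt_inf'_iff]
    intro j _
    split
    · norm_num
    · rename_i h
      simpa using norm_pos_iff.mpr (sub_ne_zero_of_ne h)
  have hr0le : ∀ j, X j ≠ X i → r0 ≤ ‖X j - X i‖ := by
    intro j hj
    calc r0 ≤ _ := Finset.inf'_le _ (Finset.mem_univ j)
      _ = ‖X j - X i‖ := if_neg hj
  set D : ℝ := Finset.univ.sup' hne (fun j => ‖X i - X j‖) with hDdef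
  have hD0 : 0 ≤ D := by
    calc (0:ℝ) = ‖X i - X i‖ := by simp
      _ ≤ D := Finset.le_sup' (fun j => ‖X i - X j‖) (Finset.mem_univ i)
  have hDle : ∀ j, ‖X i - X j‖ ≤ D := fun j => Finset.le_sup' (fun j => ‖X i - X j‖) (Finset.mem_univ j)
  set R : ℝ := k + D with hRdef
  have hR : 0 < R := by positivity
  set zmax : ℝ := R^2/2 with hzmaxdef
  set z0 : ℝ := r0^2/8 with hz0def
  have hz0 : 0 < z0 := by positivity
  set C1 : ℝ := (2*m/z0) ^ m * Real.exp (-m) with hC1def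
  have hC1 : 0 ≤ C1 := by positivity
  set M : ℝ := 2*zmax*(C1*(2/z0)) with hMdef
  have hM0 : 0 ≤ M := by positivity
  set K : ℝ := (cT ^ m/m + ((N:ℝ)*M + 1))/η with hKdef
  have hK : 0 < K := by
    apply div_pos _ hη
    have : (0:ℝ) < cT ^ m := Real.rpow_pos_of_pos hcT m
    have : (0:ℝ) ≤ (N:ℝ)*M := by positivity
    positivity
  set K' : ℝ := max K 1 with hK'def
  have hK'1 : 1 ≤ K' := le_max_right _ _
  have hK'0 : 0 < K' := lt_of_lt_of_le one_pos hK'1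
  set δ3 : ℝ := K' ^ (-(1/(2*m))) with hδ3def
  have hδ3 : 0 < δ3 := Real.rpow_pos_of_pos hK'0 _
  have hKK' : K ≤ K' := le_max_left _ _
  refine ⟨min (min 1 (r0/(2*k))) δ3, by positivity, ?_⟩
  intro σε hσ hσδ hσσT
  have hσ1 : σε < 1 := lt_of_lt_of_le hσδ ((min_le_left _ _).trans (min_le_left _ _))
  have hkσr : k * σε < r0/2 := by
    have h1 : σε < r0/(2*k) := lt_of_lt_of_le hσδ ((min_le_left _ _).trans (min_le_right _ _))
    rw [lt_div_iff₀ (by positivity)] at h1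
    linarith only [h1]
  set A : ℝ := 1/σε^2 with hAdef
  have hA : 0 < A := by positivity
  have hcA : cT ≤ A := by
    rw [hcTdef, hAdef]
    apply one_div_le_one_div_of_le (by positivity)
    exact pow_le_pow_left₀ hσ.le hσσT.le 2
  -- the crucial largeness of A^m
  have hbig : cT ^ m/m + ((N:ℝ)*M + 1) < η * A ^ m := by
    have hσδ3 : σε < δ3 := lt_of_lt_of_le hσδ (min_le_right _ _)
    have h2m : (0:ℝ) < 2*m := by linarith
    have ha2m : σε ^ (2*m) < δ3 ^ (2*m) := Real.rpow_lt_rpow hσ.le hσδ3 h2m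
    have hδ32m : δ3 ^ (2*m) = K'⁻¹ := by
      rw [hδ3def, ← Real.rpow_mul hK'0.le, show -(1/(2*m)) * (2*m) = -1 by field_simp,
        Real.rpow_neg_one]
    have hAm_eq : A ^ m = (σε ^ (2*m))⁻¹ := by
      rw [hAdef, one_div, ← Real.rpow_natCast σε 2, Real.inv_rpow (by positivity),
        ← Real.rpow_mul hσ.le]
      norm_num
    have hAK : K' < A ^ m := by
      rw [hAm_eq]
      rw [hδ32m] at ha2m
      calc K' = (K'⁻¹)⁻¹ := (inv_inv K').symm
        _ < (σε ^ (2*m))⁻¹ := by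
            apply inv_strictAnti₀ (Real.rpow_pos_of_pos hσ _) ha2m
    calc cT ^ m/m + ((N:ℝ)*M + 1) = η * K := by rw [hKdef, mul_div_cancel₀ _ (ne_of_gt hη)]
      _ ≤ η * K' := mul_le_mul_of_nonneg_left hKK' hη.le
      _ < η * A ^ m := by exact mul_lt_mul_of_pos_left hAK hη
  have hPhiInt : ∀ s z : ℝ, Phi σε σT s z
      = ∫ u in cT..A, u ^ (s - 1) * Real.exp (-z * u) := by
    intro s z
    rw [hcTdef, hAdef]
    rfl
  clear_value A δ3 K' K M C1 z0 zmax R D r0 cT η m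
  have hσσT' : σε ≤ σT := hσσT.le
  have hNpos : (0:ℝ) < (N:ℝ) := by exact_mod_cast hN
  have hd1 : ∀ z, HasDerivAt (fun z => Phi σε σT (m - 1) z) (-(Phi σε σT m z)) z := by
    intro z
    have h := Phi_hasDerivAt hσ hσT (m-1) z
    rw [show m - 1 + 1 = m by ring] at h
    exact h
  have hd2 : ∀ z, HasDerivAt (fun z => Phi σε σT m z) (-(Phi σε σT (m+1) z)) z :=
    fun z => Phi_hasDerivAt hσ hσT m z
  have hPhi1nn : ∀ z, 0 ≤ Phi σε σT m z := Phi_nonneg hσ hσσT' m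
  have hPhi2nn : ∀ z, 0 ≤ Phi σε σT (m+1) z := Phi_nonneg hσ hσσT' (m+1)
  refine ⟨convex_ball _ _, ?_⟩
  intro x hx y hy hxy p q hp hq hpq
  set v : EuclideanSpace ℝ (Fin d) := y - x with hvdef
  have hv : v ≠ 0 := sub_ne_zero_of_ne (Ne.symm hxy)
  set nv : ℝ := ‖v‖^2 with hnvdef
  have hnv : 0 < nv := by rw [hnvdef]; exact pow_pos (norm_pos_iff.mpr hv) 2
  set ip : Fin N → ℝ := fun j => ⟪x - X j, v⟫ with hipdef
  set Q : Fin N → ℝ → ℝ := fun j t => (‖x - X j‖^2 + 2*t*(ip j) + t^2*nv)/2 with hQdef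
  have hQeq : ∀ j t, ‖(x + t • v) - X j‖^2 / 2 = Q j t := by
    intro j t
    have h1 : (x + t • v) - X j = (x - X j) + t • v := by abel
    rw [h1, norm_add_sq_real, real_inner_smul_right, norm_smul, mul_pow, Real.norm_eq_abs,
      sq_abs]
    rw [hQdef]
    ring
  have hQ' : ∀ j t, HasDerivAt (Q j) (ip j + t*nv) t := by
    intro j t
    have ha : HasDerivAt (fun t : ℝ => 2*t*(ip j)) (2*(ip j)) t := by
      simpa using ((hasDerivAt_id t).const_mul 2).mul_const (ip j)
    have hb : HasDerivAt (fun t : ℝ => t^2*nv) (2*t*nv) t := by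
      simpa using (hasDerivAt_pow 2 t).mul_const nv
    have h1 : HasDerivAt (fun t : ℝ => ‖x - X j‖^2 + 2*t*(ip j) + t^2*nv)
        (2*(ip j) + 2*t*nv) t := (ha.const_add (‖x - X j‖^2)).add hb
    have h2 := h1.div_const 2
    exact h2.congr_deriv (by ring)
  have hipt' : ∀ (j : Fin N) (t : ℝ), ip j + t*nv = ⟪(x + t • v) - X j, v⟫ := by
    intro j t
    have h1 : (x + t • v) - X j = (x - X j) + t • v := by abel
    rw [h1, inner_add_left, real_inner_smul_left, real_inner_self_eq_norm_sq]
  set g : ℝ → ℝ := fun t => (1/(N:ℝ)) * ∑ j : Fin N, Phi σε σT (m-1) (Q j t) with hgdef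
  set g1 : ℝ → ℝ := fun t => (1/(N:ℝ)) * ∑ j : Fin N,
      -(Phi σε σT m (Q j t)) * (ip j + t*nv) with hg1def
  set g2 : ℝ → ℝ := fun t => (1/(N:ℝ)) * ∑ j : Fin N,
      (Phi σε σT (m+1) (Q j t) * ((ip j + t*nv)*(ip j + t*nv)) - Phi σε σT m (Q j t) * nv)
    with hg2def
  have hg : ∀ t, HasDerivAt g (g1 t) t := by
    intro t
    apply HasDerivAt.const_mul
    apply HasDerivAt.fun_sum
    intro j _
    exact (hd1 (Q j t)).comp t (hQ' j t)
  have hg1 : ∀ t, HasDerivAt g1 (g2 t) t := by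
    intro t
    apply HasDerivAt.const_mul
    apply HasDerivAt.fun_sum
    intro j _
    have hA1 : HasDerivAt (fun t => -(Phi σε σT m (Q j t)))
        ((Phi σε σT (m+1) (Q j t)) * (ip j + t*nv)) t := by
      have h := ((hd2 (Q j t)).comp t (hQ' j t)).neg
      exact h.congr_deriv (by ring)
    have hA2 : HasDerivAt (fun t : ℝ => ip j + t*nv) nv t := by
      simpa using ((hasDerivAt_id t).mul_const nv).const_add (ip j)
    have h := hA1.mul hA2
    exact h.congr_deriv (by ring)
  clear_value g2 g1 g Q ip nv v
  -- the analytic core: negativity of the second derivative on the segment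
  have hg2neg : ∀ t ∈ Set.Ioo (0:ℝ) 1, g2 t < 0 := by
    intro t ht
    have hpt : (x + t • v) ∈ Metric.ball (X i) (k * σε) := by
      have h1 : x + t • v = (1 - t) • x + t • y := by rw [hvdef]; module
      rw [h1]
      exact (convex_ball (X i) (k*σε)) hx hy (by linarith only [ht.2]) ht.1.le (by ring)
    set pt : EuclideanSpace ℝ (Fin d) := x + t • v with hptdef
    have hptn : ‖pt - X i‖ < k * σε := by
      have h2 := Metric.mem_ball.mp hpt
      rwa [dist_eq_norm] at h2
    have hptnn : 0 ≤ ‖pt - X i‖ := norm_nonneg _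
    have hQval : ∀ j, Q j t = ‖pt - X j‖^2/2 := fun j => by
      rw [hptdef]; exact (hQeq j t).symm
    have hipt : ∀ j, ip j + t*nv = ⟪pt - X j, v⟫ := fun j => by
      rw [hptdef]; exact hipt' j t
    clear_value pt
    have hQnn : ∀ j, 0 ≤ Q j t := fun j => by rw [hQval j]; positivity
    -- near bound
    have htermi : ∀ j : Fin N, X j = X i →
        2*(Q j t)*(Phi σε σT (m+1) (Q j t)) - Phi σε σT m (Q j t) ≤ cT ^ m/m - η*A ^ m := by
      intro j hXj
      have h2 : Q j t ≤ (k*σε)^2/2 := by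
        rw [hQval j, hXj]
        nlinarith only [mul_self_le_mul_self hptnn hptn.le]
      have h3 : Q j t * A ≤ k^2/2 := by
        rw [hAdef]
        have h4 : Q j t * (1/σε^2) ≤ ((k*σε)^2/2) * (1/σε^2) :=
          mul_le_mul_of_nonneg_right h2 (by positivity)
        have h5 : ((k*σε)^2/2) * (1/σε^2) = k^2/2 := by
          field_simp
        linarith only [h4, h5]
      have h6 := key_near (c := cT) (A := A) hcT hcA hm (hQnn j) h3 (k := k)
      rw [← hηdef] at h6
      rw [hPhiInt (m+1) (Q j t), hPhiInt m (Q j t)]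
      exact h6
    -- far bound
    have hterm : ∀ j : Fin N,
        2*(Q j t)*(Phi σε σT (m+1) (Q j t)) - Phi σε σT m (Q j t) ≤ M := by
      intro j
      by_cases hXj : X j = X i
      · have h7 := htermi j hXj
        have h8 : cT ^ m/m - η*A ^ m < -((N:ℝ)*M + 1) := by linarith only [hbig]
        have h9 : (0:ℝ) ≤ (N:ℝ)*M := by positivity
        linarith only [h7, h8, h9, hM0]
      · have hlow : r0/2 ≤ ‖pt - X j‖ := by
          have htri : dist (X j) (X i) ≤ dist (X j) pt + dist pt (X i) := dist_triangle _ _ _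
          rw [dist_eq_norm, dist_eq_norm, dist_eq_norm] at htri
          have hrev : ‖X j - pt‖ = ‖pt - X j‖ := norm_sub_rev _ _
          have hr := hr0le j hXj
          linarith only [htri, hrev, hr, hptn, hkσr]
        have hz0le : z0 ≤ Q j t := by
          rw [hQval j, hz0def]
          nlinarith only [hlow, hr0pos, mul_self_le_mul_self (by positivity : (0:ℝ) ≤ r0/2) hlow]
        have hup : Q j t ≤ zmax := by
          rw [hQval j, hzmaxdef]
          have htri : dist pt (X j) ≤ dist pt (X i) + dist (X i) (X j) := dist_triangle _ _ _
          rw [dist_eq_norm, dist_eq_norm, dist_eq_norm] at htri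
          have hd := hDle j
          have hkσ : k*σε ≤ k := by nlinarith only [hσ1, hk0]
          have hR' : ‖pt - X j‖ ≤ R := by rw [hRdef]; linarith only [htri, hd, hkσ, hptn]
          have hsq := pow_le_pow_left₀ (norm_nonneg (pt - X j)) hR' 2
          linarith only [hsq]
        have hΦ2 : Phi σε σT (m+1) (Q j t) ≤ C1 * (2/z0) := by
          rw [hPhiInt (m+1) (Q j t), hC1def]
          exact key_far (c := cT) (A := A) hcT hcA hm hz0 hz0le
        have hΦ1 := hPhi1nn (Q j t)
        have hΦ2nn := hPhi2nn (Q j t)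
        have h10 : 2*(Q j t)*(Phi σε σT (m+1) (Q j t)) ≤ 2*zmax*(C1*(2/z0)) := by
          have hzm : 0 ≤ zmax := le_trans (hQnn j) hup
          have hc2 : 0 ≤ C1 * (2/z0) := by positivity
          nlinarith only [hup, hΦ2, hΦ2nn, hzm, hQnn j, hc2]
        rw [hMdef]
        linarith only [h10, hΦ1]
    -- summation
    set T : Fin N → ℝ := fun j =>
      2*(Q j t)*(Phi σε σT (m+1) (Q j t)) - Phi σε σT m (Q j t) with hTdef
    clear_value T
    have hsum : ∑ j : Fin N, T j < 0 := by
      have h1 : T i + ∑ j ∈ Finset.univ.erase i, T j = ∑ j : Fin N, T j :=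
        Finset.add_sum_erase _ T (Finset.mem_univ i)
      have h3 : ∑ j ∈ Finset.univ.erase i, T j ≤ (Finset.univ.erase i).card • M :=
        Finset.sum_le_card_nsmul _ _ _ (fun j _ => by rw [hTdef]; exact hterm j)
      rw [Finset.card_erase_of_mem (Finset.mem_univ i), Finset.card_univ, Fintype.card_fin,
        nsmul_eq_mul] at h3
      have hcast : ((N - 1 : ℕ):ℝ) = (N:ℝ) - 1 := by
        rw [Nat.cast_sub hN]; norm_num
      rw [hcast] at h3
      have h4 : T i ≤ cT ^ m/m - η*A ^ m := by rw [hTdef]; exact htermi i rfl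
      have h5 : cT ^ m/m - η*A ^ m < -((N:ℝ)*M + 1) := by linarith only [hbig]
      have hNM : ((N:ℝ) - 1) * M = (N:ℝ)*M - M := by ring
      rw [hNM] at h3
      linarith only [h1, h3, h4, h5, hM0]
    have hsummand : ∀ j : Fin N,
        Phi σε σT (m+1) (Q j t) * ((ip j + t*nv)*(ip j + t*nv)) - Phi σε σT m (Q j t) * nv
          ≤ nv * T j := by
      intro j
      have hCS : (⟪pt - X j, v⟫)*(⟪pt - X j, v⟫) ≤ (2*(Q j t))*nv := by
        have h1 := real_inner_mul_inner_self_le (pt - X j) v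
        rw [real_inner_self_eq_norm_sq, real_inner_self_eq_norm_sq] at h1
        have h2 : ‖pt - X j‖^2 = 2*(Q j t) := by rw [hQval j]; ring
        rw [h2, ← hnvdef] at h1
        exact h1
      rw [hipt j]
      have hΦ2nn := hPhi2nn (Q j t)
      have h6 := mul_le_mul_of_nonneg_left hCS hΦ2nn
      simp only [hTdef]
      linarith only [h6]
    have hsum2 : (∑ j : Fin N,
        (Phi σε σT (m+1) (Q j t) * ((ip j + t*nv)*(ip j + t*nv)) - Phi σε σT m (Q j t) * nv))
          ≤ nv * ∑ j : Fin N, T j := by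
      rw [Finset.mul_sum]
      exact Finset.sum_le_sum (fun j _ => hsummand j)
    have hlt : nv * ∑ j : Fin N, T j < 0 := mul_neg_of_pos_of_neg hnv hsum
    calc g2 t ≤ (1/(N:ℝ)) * (nv * ∑ j : Fin N, T j) := by
          rw [hg2def]
          exact mul_le_mul_of_nonneg_left hsum2 (by positivity)
      _ < 0 := mul_neg_of_pos_of_neg (one_div_pos.mpr hNpos) hlt
  -- strict concavity of the slice
  have hcont : ContinuousOn g (Set.Icc (0:ℝ) 1) :=
    fun t _ => ((hg t).differentiableAt.continuousAt).continuousWithinAt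
  have hSC : StrictConcaveOn ℝ (Set.Icc (0:ℝ) 1) g := by
    apply strictConcaveOn_of_deriv2_neg (convex_Icc 0 1) hcont
    intro t ht
    rw [interior_Icc] at ht
    have h1 : deriv g = g1 := funext fun u => (hg u).deriv
    have h2 : deriv^[2] g t = g2 t := by
      rw [Function.iterate_succ_apply', Function.iterate_one, h1]
      exact (hg1 t).deriv
    rw [h2]
    exact hg2neg t ht
  -- transfer back
  have key := hSC.2 (Set.mem_Icc.mpr ⟨le_refl 0, zero_le_one⟩)
    (Set.mem_Icc.mpr ⟨zero_le_one, le_refl 1⟩) (by norm_num) hp hq hpq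
  have ex0 : x + (0:ℝ) • v = x := by rw [hvdef]; module
  have ex1 : x + (1:ℝ) • v = y := by rw [hvdef]; module
  have exq : x + q • v = p • x + q • y := by
    have hp1 : p = 1 - q := by linarith only [hpq]
    rw [hvdef, hp1]; module
  have e1 : ∀ j, Q j 0 = ‖x - X j‖^2/2 := by
    intro j
    rw [← hQeq j 0, ex0]
  have e2 : ∀ j, Q j 1 = ‖y - X j‖^2/2 := by
    intro j
    rw [← hQeq j 1, ex1]
  have e3 : ∀ j, Q j q = ‖(p • x + q • y) - X j‖^2/2 := by
    intro j
    rw [← hQeq j q, exq]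
  have e4 : p • (0:ℝ) + q • (1:ℝ) = q := by simp
  rw [e4] at key
  have eg0 : g 0 = (1/(N:ℝ)) * ∑ j : Fin N, Phi σε σT (m-1) (‖x - X j‖^2/2) := by
    rw [hgdef]
    simp only
    congr 1
    exact Finset.sum_congr rfl (fun j _ => by rw [e1 j])
  have eg1 : g 1 = (1/(N:ℝ)) * ∑ j : Fin N, Phi σε σT (m-1) (‖y - X j‖^2/2) := by
    rw [hgdef]
    simp only
    congr 1
    exact Finset.sum_congr rfl (fun j _ => by rw [e2 j])
  have egq : g q = (1/(N:ℝ)) * ∑ j : Fin N, Phi σε σT (m-1) (‖(p • x + q • y) - X j‖^2/2) := by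
    rw [hgdef]
    simp only
    congr 1
    exact Finset.sum_congr rfl (fun j _ => by rw [e3 j])
  rw [eg0, eg1, egq] at key
  exact key
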